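/- Under the assumptions that all inputs satisfy ‖x‖ ≤ c, that the projection coordinates are bounded by M, and using Lemma 21 of Bousquet–Elisseeff (‖Δθ‖² ≤ (c/(2m))|Δf(xᵢ)| where Δf(x) = ⟨Δθ, μ_L(x)⟩), the leave-one-out parameter change satisfies ‖Δθ‖ ≤ (c/(2m))·√L·M, and consequently for all x, |Δf(x)| ≤ c·L·M²/(2m). -/

import Mathlib

lemma norm_mu_bound {L : ℕ} (M : ℝ) (hM : 0 ≤ M) (v : EuclideanSpace ℝ (Fin L))
    (hv : ∀ p, |v p| ≤ M) : ‖v‖ ≤ Real.sqrt L * M := by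
  rw [EuclideanSpace.norm_eq]
  have h1 : ∑ p, ‖v p‖ ^ 2 ≤ (L : ℝ) * M ^ 2 := by
    calc ∑ p, ‖v p‖ ^ 2 ≤ ∑ _p : Fin L, M ^ 2 := by
          apply Finset.sum_le_sum
          intro p _
          have := hv p
          rw [Real.norm_eq_abs]; nlinarith [abs_nonneg (v p)]
      _ = (L : ℝ) * M ^ 2 := by simp [mul_comm]
  calc Real.sqrt (∑ p, ‖v p‖ ^ 2) ≤ Real.sqrt ((L : ℝ) * M ^ 2) := Real.sqrt_le_sqrt h1
    _ = Real.sqrt L * M := by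
        rw [Real.sqrt_mul (Nat.cast_nonneg L), Real.sqrt_sq hM]

/-- Given the Lemma-21 inequality `‖Δθ‖² ≤ (c/(2m))|Δf(xᵢ)|` with
`Δf(x) = ⟨Δθ, μ_L(x)⟩` and projection coordinates bounded by `M`, one gets
`‖Δθ‖ ≤ (c/(2m))·√L·M` and `|Δf(x)| ≤ c·L·M²/(2m)` for all `x`. -/
theorem leave_one_out_delta_bounds {X : Type*} (L m : ℕ) (hm : 1 ≤ m)
    (c M : ℝ) (hc : 0 < c) (hM : 0 ≤ M)
    (μL : X → EuclideanSpace ℝ (Fin L))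
    (hμ : ∀ x p, |μL x p| ≤ M)
    (Δθ : EuclideanSpace ℝ (Fin L)) (xi : X)
    (hlem : ‖Δθ‖ ^ 2 ≤ (c / (2 * m)) * |(inner ℝ Δθ (μL xi) : ℝ)|) :
    ‖Δθ‖ ≤ (c / (2 * m)) * Real.sqrt L * M ∧
    ∀ x : X, |(inner ℝ Δθ (μL x) : ℝ)| ≤ c * L * M ^ 2 / (2 * m) := by
  have hmpos : (0:ℝ) < 2 * m := by positivity
  have hcm : (0:ℝ) < c / (2 * m) := by positivity
  have hμnorm : ∀ x, ‖μL x‖ ≤ Real.sqrt L * M := fun x =>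
    norm_mu_bound M hM (μL x) (hμ x)
  have hθ : ‖Δθ‖ ≤ (c / (2 * m)) * Real.sqrt L * M := by
    have hcs : |(inner ℝ Δθ (μL xi) : ℝ)| ≤ ‖Δθ‖ * ‖μL xi‖ := abs_real_inner_le_norm _ _
    have h2 : ‖Δθ‖ ^ 2 ≤ (c / (2 * m)) * (‖Δθ‖ * (Real.sqrt L * M)) := by
      calc ‖Δθ‖ ^ 2 ≤ (c / (2 * m)) * |(inner ℝ Δθ (μL xi) : ℝ)| := hlem
        _ ≤ (c / (2 * m)) * (‖Δθ‖ * (Real.sqrt L * M)) := by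
            apply mul_le_mul_of_nonneg_left _ hcm.le
            calc |(inner ℝ Δθ (μL xi) : ℝ)| ≤ ‖Δθ‖ * ‖μL xi‖ := hcs
              _ ≤ ‖Δθ‖ * (Real.sqrt L * M) :=
                mul_le_mul_of_nonneg_left (hμnorm xi) (norm_nonneg _)
    rcases eq_or_lt_of_le (norm_nonneg Δθ) with h0 | h0
    · rw [← h0]; positivity
    · nlinarith
  refine ⟨hθ, fun x => ?_⟩
  have hcs : |(inner ℝ Δθ (μL x) : ℝ)| ≤ ‖Δθ‖ * ‖μL x‖ := abs_real_inner_le_norm _ _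
  have hL : (0:ℝ) ≤ Real.sqrt L * M := by positivity
  calc |(inner ℝ Δθ (μL x) : ℝ)| ≤ ‖Δθ‖ * ‖μL x‖ := hcs
    _ ≤ ((c / (2 * m)) * Real.sqrt L * M) * (Real.sqrt L * M) := by
        apply mul_le_mul hθ (hμnorm x) (norm_nonneg _)
        positivity
    _ = c * (Real.sqrt L * Real.sqrt L) * M ^ 2 / (2 * m) := by ring
    _ = c * L * M ^ 2 / (2 * m) := by
        rw [Real.mul_self_sqrt (Nat.cast_nonneg L)]
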